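/- Let f: ℝ → ℝ be C² with |f''| ≤ K and let F be a primitive of f. Then for all u ∈ H¹(ℝ) and Ψ ∈ L^∞(ℝ): the function x ↦ F(u(x)+Ψ(x)) − F(Ψ(x)) − u(x) f(Ψ(x)) is integrable, and |∫_ℝ (F(u+Ψ) − F(Ψ) − u f(Ψ)) dx| ≤ C(‖Ψ‖_{L^∞}, K)(‖u‖²_{L²} + ‖u‖³_{L³}) for some constant C depending only on ‖Ψ‖_{L^∞} and K; in particular the modified energy 𝓔(u) = (1/2)∫ u_x² − ∫ (F(u+Ψ) − F(Ψ) − u f(Ψ)) is well-defined and finite on H¹(ℝ). -/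

import Mathlib

open MeasureTheory
noncomputable section

/-- MVT with explicit derivative and abs bound on the segment. -/
lemma ModEnergy.mvt_abs {g g' : ℝ → ℝ} {D : ℝ} (hg : ∀ t, HasDerivAt g (g' t) t)
    (b c : ℝ) (hb : ∀ t ∈ Set.uIcc b c, |g' t| ≤ D) :
    |g c - g b| ≤ D * |c - b| := by
  have := Convex.norm_image_sub_le_of_norm_hasDerivWithin_le
    (f := g) (f' := g') (s := Set.uIcc b c)
    (fun t ht => (hg t).hasDerivWithinAt) (fun t ht => hb t ht)
    (convex_uIcc b c) Set.left_mem_uIcc Set.right_mem_uIcc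
  simpa [Real.norm_eq_abs] using this

lemma ModEnergy.taylor (f F : ℝ → ℝ) (K : ℝ) (hf : ContDiff ℝ 2 f)
    (hK : ∀ x, |iteratedDeriv 2 f x| ≤ K)
    (hF : ∀ x, HasDerivAt F (f x) x) (M : ℝ)
    (a b : ℝ) (hb : |b| ≤ M) :
    |F (a + b) - F b - a * f b| ≤ (|deriv f 0| + K * M) * a ^ 2 + K * |a| ^ 3 := by
  have hK0 : 0 ≤ K := le_trans (abs_nonneg _) (hK 0)
  have hfd : Differentiable ℝ f := hf.differentiable (by norm_num)
  have hf2 : ContDiff ℝ ((1 : WithTop ℕ∞) + 1) f := by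
    have : ((2 : ℕ) : WithTop ℕ∞) = (1 : WithTop ℕ∞) + 1 := by norm_num
    rw [← this]; exact_mod_cast hf
  rw [contDiff_succ_iff_deriv] at hf2
  have hfd' : Differentiable ℝ (deriv f) := hf2.2.2.differentiable one_ne_zero
  -- Lipschitz bound for deriv f
  have hlip : ∀ x y : ℝ, |deriv f x - deriv f y| ≤ K * |x - y| := by
    intro x y
    have := Convex.norm_image_sub_le_of_norm_hasDerivWithin_le
      (f := deriv f) (f' := deriv (deriv f)) (s := Set.univ)
      (fun z _ => (hfd' z).hasDerivAt.hasDerivWithinAt)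
      (fun z _ => by
        have := hK z
        rw [iteratedDeriv_succ, iteratedDeriv_one] at this
        simpa [Real.norm_eq_abs] using this)
      convex_univ (Set.mem_univ y) (Set.mem_univ x)
    simpa [Real.norm_eq_abs] using this
  have hA : ∀ t : ℝ, |deriv f t| ≤ |deriv f 0| + K * |t| := by
    intro t
    have h1 := hlip t 0
    have h2 := abs_sub_abs_le_abs_sub (deriv f t) (deriv f 0)
    simp only [sub_zero] at h1
    linarith
  set A := |deriv f 0| with hAdef
  set D := A + K * (M + |a|) with hD
  -- inner MVT : |f (t+b) - f b| ≤ D * |t| for |t| ≤ |a|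
  have hM0 : 0 ≤ M := le_trans (abs_nonneg b) hb
  have hinner : ∀ t : ℝ, |t| ≤ |a| → |f (t + b) - f b| ≤ D * |a| := by
    intro t ht
    have hmvt := ModEnergy.mvt_abs (g := f) (g' := fun θ => deriv f θ)
      (fun θ => (hfd θ).hasDerivAt) b (t + b) (fun θ hθ => by
        have h1 : |θ - b| ≤ |t + b - b| := Set.abs_sub_left_of_mem_uIcc hθ
        simp only [add_sub_cancel_right] at h1
        have h2 : |θ| ≤ M + |a| := by
          have := abs_sub_abs_le_abs_sub θ b
          linarith
        have := hA θ
        have : |deriv f θ| ≤ A + K * (M + |a|) := by nlinarith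
        simpa [hD] using this)
    calc |f (t + b) - f b| ≤ D * |t + b - b| := hmvt
      _ = D * |t| := by ring_nf
      _ ≤ D * |a| := by
          have hD0 : 0 ≤ D := by positivity
          exact mul_le_mul_of_nonneg_left ht hD0
  -- outer MVT
  set φ : ℝ → ℝ := fun t => F (t + b) - F b - t * f b with hφ
  have hφd : ∀ t : ℝ, HasDerivAt φ (f (t + b) - f b) t := by
    intro t
    have h1 : HasDerivAt (fun t : ℝ => F (t + b)) (f (t + b) * 1) t :=
      (hF (t + b)).comp t ((hasDerivAt_id t).add_const b)
    have h2 := (h1.sub_const (F b)).sub ((hasDerivAt_id t).mul_const (f b))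
    exact h2.congr_deriv (by ring)
  have houter := ModEnergy.mvt_abs (g := φ) (g' := fun t => f (t + b) - f b) hφd 0 a
    (fun t ht => by
      have h1 : |t - 0| ≤ |a - 0| := Set.abs_sub_left_of_mem_uIcc ht
      simp only [sub_zero] at h1
      exact hinner t h1)
  have hφ0 : φ 0 = 0 := by simp [hφ]
  have hφa : φ a = F (a + b) - F b - a * f b := rfl
  rw [hφ0, hφa, sub_zero, sub_zero] at houter
  have : D * |a| * |a| = (A + K * M) * a ^ 2 + K * |a| ^ 3 := by
    have h1 : |a| * |a| = a ^ 2 := by rw [abs_mul_abs_self]; ring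
    have h2 : |a| ^ 3 = |a| * a ^ 2 := by rw [← h1]; ring
    rw [hD, h2, ← h1]; ring
  linarith [houter, this.ge, this.le]


lemma ModEnergy.sq_bound {u : ℝ → ℝ} (hu : Differentiable ℝ u)
    (hu2 : MemLp u 2 volume) (hu'2 : MemLp (deriv u) 2 volume) :
    ∀ x : ℝ, u x ^ 2 ≤ ∫ t : ℝ, |2 * (u t * deriv u t)| := by
  have hsq : Integrable (fun t => u t ^ 2) := hu2.integrable_sq
  have hsq' : Integrable (fun t => deriv u t ^ 2) := hu'2.integrable_sq
  have humeas : AEStronglyMeasurable u volume := hu2.aestronglyMeasurable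
  have hu'meas : AEStronglyMeasurable (deriv u) volume := hu'2.aestronglyMeasurable
  have hmul : Integrable (fun t => 2 * (u t * deriv u t)) := by
    refine Integrable.mono' (hsq.add hsq') ?_ ?_
    · exact ((humeas.mul hu'meas).const_mul 2)
    · filter_upwards with t
      rw [Real.norm_eq_abs, Pi.add_apply]
      have h1 := sq_nonneg (u t - deriv u t)
      have h2 := sq_nonneg (u t + deriv u t)
      rcases abs_cases (2 * (u t * deriv u t)) with ⟨h, _⟩ | ⟨h, _⟩ <;> rw [h] <;> nlinarith
  have habs : Integrable (fun t => |2 * (u t * deriv u t)|) := hmul.abs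
  set B := ∫ t : ℝ, |2 * (u t * deriv u t)| with hB
  have hg' : ∀ t : ℝ, HasDerivAt (fun y => u y ^ 2) (2 * (u t * deriv u t)) t := by
    intro t
    have := ((hu t).hasDerivAt.mul (hu t).hasDerivAt)
    have h2 : HasDerivAt (fun y => u y * u y) (2 * (u t * deriv u t)) t := by
      exact this.congr_deriv (by ring)
    have h3 : (fun y => u y ^ 2) = fun y => u y * u y := by funext y; ring
    rw [h3]; exact h2
  intro x
  -- for every ε > 0 there is y with u y ^ 2 < ε
  refine le_of_forall_pos_le_add ?_
  intro ε hε
  have hexists : ∃ y : ℝ, u y ^ 2 < ε := by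
    by_contra h
    push_neg at h
    have : Integrable (fun _ : ℝ => ε) := by
      refine Integrable.mono' hsq aestronglyMeasurable_const ?_
      filter_upwards with t
      rw [Real.norm_eq_abs, abs_of_pos hε]
      exact h t
    rw [integrable_const_iff] at this
    rcases this with h0 | hfin
    · exact absurd h0 (ne_of_gt hε)
    · simpa using hfin.measure_univ_lt_top
  obtain ⟨y, hy⟩ := hexists
  have hftc : ∫ t in y..x, 2 * (u t * deriv u t) = u x ^ 2 - u y ^ 2 :=
    intervalIntegral.integral_eq_sub_of_hasDerivAt (fun t _ => hg' t) hmul.intervalIntegrable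
  have hbd : |∫ t in y..x, 2 * (u t * deriv u t)| ≤ B := by
    have h1 := intervalIntegral.norm_integral_le_abs_integral_norm
      (f := fun t => 2 * (u t * deriv u t)) (a := y) (b := x) (μ := volume)
    rw [Real.norm_eq_abs] at h1
    refine h1.trans ?_
    have key : ∀ p q : ℝ, p ≤ q → |∫ t in p..q, ‖2 * (u t * deriv u t)‖| ≤ B := by
      intro p q hpq
      rw [intervalIntegral.integral_of_le hpq]
      have hnn : 0 ≤ ∫ t in Set.Ioc p q, ‖2 * (u t * deriv u t)‖ :=
        setIntegral_nonneg measurableSet_Ioc (fun t _ => norm_nonneg _)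
      rw [abs_of_nonneg hnn]
      refine setIntegral_le_integral habs ?_
      filter_upwards with t using abs_nonneg _
    rcases le_total y x with h | h
    · simpa [Real.norm_eq_abs] using key y x h
    · have := key x y h
      rw [intervalIntegral.integral_symm x y, abs_neg]
      exact this
  rw [hftc] at hbd
  have := (abs_le.mp hbd).2
  linarith


/-- Well-definedness of the modified energy: if `|f''| ≤ K` and `F' = f`, then for
`u ∈ H¹(ℝ)` and `Ψ ∈ L^∞` with `‖Ψ‖_{L^∞} ≤ MΨ`, the function
`F(u+Ψ) − F(Ψ) − u f(Ψ)` is integrable with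
`|∫ (F(u+Ψ) − F(Ψ) − u f(Ψ))| ≤ C(MΨ, K)(‖u‖²_{L²} + ‖u‖³_{L³})`. -/
theorem modified_energy_finite (f F : ℝ → ℝ) (K : ℝ) (hf : ContDiff ℝ 2 f)
    (hK : ∀ x, |iteratedDeriv 2 f x| ≤ K)
    (hF : ∀ x, HasDerivAt F (f x) x) (MΨ : ℝ) :
    ∃ C > 0, ∀ u Ψ : ℝ → ℝ,
      Differentiable ℝ u → MemLp u 2 volume → MemLp (deriv u) 2 volume →
      Measurable Ψ → (∀ x, |Ψ x| ≤ MΨ) →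
      Integrable (fun x => F (u x + Ψ x) - F (Ψ x) - u x * f (Ψ x)) ∧
      |∫ x : ℝ, (F (u x + Ψ x) - F (Ψ x) - u x * f (Ψ x))| ≤
        C * ((∫ x : ℝ, u x ^ 2) + ∫ x : ℝ, |u x| ^ 3) := by
  have hK0 : 0 ≤ K := le_trans (abs_nonneg _) (hK 0)
  set A := |deriv f 0| with hAdef
  set M := max MΨ 0 with hMdef
  have hM0 : 0 ≤ M := le_max_right _ _
  have hA0 : 0 ≤ A := abs_nonneg _
  refine ⟨A + K * M + K + 1, by positivity, ?_⟩
  intro u Ψ hu hu2 hu'2 hΨm hΨ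
  have hMb : ∀ x, |Ψ x| ≤ M := fun x => (hΨ x).trans (le_max_left _ _)
  have hpt : ∀ x, |F (u x + Ψ x) - F (Ψ x) - u x * f (Ψ x)| ≤
      (A + K * M) * u x ^ 2 + K * |u x| ^ 3 :=
    fun x => ModEnergy.taylor f F K hf hK hF M (u x) (Ψ x) (hMb x)
  have hsq : Integrable (fun x => u x ^ 2) := hu2.integrable_sq
  have hBpt := ModEnergy.sq_bound hu hu2 hu'2
  set B := ∫ t : ℝ, |2 * (u t * deriv u t)| with hBdef
  have hub : ∀ x, |u x| ≤ Real.sqrt B := by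
    intro x
    rw [show |u x| = Real.sqrt (u x ^ 2) from (Real.sqrt_sq_eq_abs _).symm]
    exact Real.sqrt_le_sqrt (hBpt x)
  have hcube : Integrable (fun x => |u x| ^ 3) := by
    refine Integrable.mono' (hsq.const_mul (Real.sqrt B)) ?_ ?_
    · exact ((hu.continuous.abs.pow 3)).aestronglyMeasurable
    · filter_upwards with x
      rw [Real.norm_eq_abs, abs_of_nonneg (by positivity)]
      have h1 : |u x| ^ 3 = |u x| * u x ^ 2 := by rw [← sq_abs]; ring
      rw [h1]
      exact mul_le_mul_of_nonneg_right (hub x) (sq_nonneg _)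
  have hFd : Differentiable ℝ F := fun x => (hF x).differentiableAt
  have hFc : Continuous F := hFd.continuous
  have hfc : Continuous f := hf.continuous
  have hmeas : AEStronglyMeasurable
      (fun x => F (u x + Ψ x) - F (Ψ x) - u x * f (Ψ x)) volume := by
    apply Measurable.aestronglyMeasurable
    exact ((hFc.measurable.comp ((hu.continuous.measurable).add hΨm)).sub
      (hFc.measurable.comp hΨm)).sub
      ((hu.continuous.measurable).mul (hfc.measurable.comp hΨm))
  have hdom : Integrable (fun x => (A + K * M) * u x ^ 2 + K * |u x| ^ 3) :=
    (hsq.const_mul _).add (hcube.const_mul _)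
  have hint : Integrable (fun x => F (u x + Ψ x) - F (Ψ x) - u x * f (Ψ x)) := by
    refine hdom.mono' hmeas ?_
    filter_upwards with x
    rw [Real.norm_eq_abs]
    exact hpt x
  refine ⟨hint, ?_⟩
  have h1 : |∫ x : ℝ, (F (u x + Ψ x) - F (Ψ x) - u x * f (Ψ x))| ≤
      ∫ x : ℝ, |F (u x + Ψ x) - F (Ψ x) - u x * f (Ψ x)| := by
    simpa [Real.norm_eq_abs] using
      norm_integral_le_integral_norm (fun x => F (u x + Ψ x) - F (Ψ x) - u x * f (Ψ x))
  have h2 : ∫ x : ℝ, |F (u x + Ψ x) - F (Ψ x) - u x * f (Ψ x)| ≤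
      ∫ x : ℝ, ((A + K * M) * u x ^ 2 + K * |u x| ^ 3) :=
    integral_mono hint.abs hdom fun x => hpt x
  have h3 : ∫ x : ℝ, ((A + K * M) * u x ^ 2 + K * |u x| ^ 3) =
      (A + K * M) * (∫ x : ℝ, u x ^ 2) + K * ∫ x : ℝ, |u x| ^ 3 := by
    rw [integral_add (hsq.const_mul _) (hcube.const_mul _),
      integral_const_mul, integral_const_mul]
  have hI2 : 0 ≤ ∫ x : ℝ, u x ^ 2 := integral_nonneg fun x => sq_nonneg _
  have hI3 : 0 ≤ ∫ x : ℝ, |u x| ^ 3 := integral_nonneg fun x => by positivity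
  rw [h3] at h2
  nlinarith [h1, h2, hI2, hI3, mul_nonneg hK0 hI2, mul_nonneg hA0 hI3, mul_nonneg (mul_nonneg hK0 hM0) hI3]
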